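/- The map $\theta: \mathbb{L} \to \mathbb{W}(\mathbb{L})$ does not preserve addition: there exist $r, r' \in [0,\infty]$ with $\theta(\min\{r,r'\}) \neq \theta(r) \oplus_{\mathbb{W}(\mathbb{L})} \theta(r')$. Specifically, $(\theta(r) \oplus_{\mathbb{W}(\mathbb{L})} \theta(r'))(m_{(2,1)}) = \min\{2r + r', r + 2r'\}$ while $\theta(\min\{r,r'\})(m_{(2,1)}) = \infty$, so for finite $r, r'$ these disagree. Consequently there is no rig homomorphism extension; $\theta$ is only monoidal. -/

import Mathlib

open scoped Classical ENNReal
open Tropical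

noncomputable section

/-- The Lawvere quantale `𝕃 = [0,∞]` viewed as a rig: addition is `min`, multiplication is `+`. -/
abbrev Trop : Type := Tropical ℝ≥0∞

/-- Coefficient of a formal power series in infinitely many variables. -/
def cf {σ : Type} (φ : MvPowerSeries σ ℕ) (d : σ →₀ ℕ) : ℕ := MvPowerSeries.coeff d φ

/-- The multiset of nonzero entries of an exponent vector. -/
def parts (d : ℕ →₀ ℕ) : Multiset ℕ := d.support.val.map d

lemma zero_not_mem_parts (d : ℕ →₀ ℕ) : (0 : ℕ) ∉ parts d := by
  intro h
  obtain ⟨a, ha, ha0⟩ := Multiset.mem_map.mp h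
  exact Finsupp.mem_support_iff.mp (Finset.mem_val.mp ha) ha0

/-- Partitions: multisets of positive natural numbers. -/
def Ptn : Type := {s : Multiset ℕ // (0 : ℕ) ∉ s}

/-- The monomial symmetric function `m_λ`, as a symmetric power series of bounded degree
in the variables `x_0, x_1, x_2, …`. -/
def mfun (l : Multiset ℕ) : MvPowerSeries ℕ ℕ := fun d => if parts d = l then 1 else 0

/-- `Λ`, the rig of symmetric functions with coefficients in `ℕ`: the subsemiring of
power series generated by the monomial symmetric functions. -/
def Lam : Subsemiring (MvPowerSeries ℕ ℕ) :=
  Subsemiring.closure (Set.range fun l : Ptn => mfun l.1)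

/-- `m_λ` as an element of `Λ`. -/
def mP (l : Ptn) : Lam := ⟨mfun l.1, Subsemiring.subset_closure (Set.mem_range_self l)⟩

/-- The one-part partition `(n)`. -/
def pnat (n : ℕ) (hn : 0 < n) : Ptn := ⟨{n}, fun h => hn.ne' (Multiset.mem_singleton.mp h).symm⟩

/-- The Witt vectors of the Lawvere quantale: rig homomorphisms `Λ → 𝕃`. -/
abbrev WL := Lam →+* Trop

/-- Row margin of an exponent vector on `ℕ × ℕ`. -/
def rowM (e : (ℕ × ℕ) →₀ ℕ) : ℕ →₀ ℕ := e.mapDomain Prod.fst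
/-- Column margin of an exponent vector on `ℕ × ℕ`. -/
def colM (e : (ℕ × ℕ) →₀ ℕ) : ℕ →₀ ℕ := e.mapDomain Prod.snd

/-- The elementary tensor `a ⊗ b` in `Λ ⊗ Λ`, realized as a power series on variables
`x_i ⊗ x_j` indexed by `ℕ × ℕ`. -/
def tens (a b : MvPowerSeries ℕ ℕ) : MvPowerSeries (ℕ × ℕ) ℕ :=
  fun e => cf a (rowM e) * cf b (colM e)

/-- Comultiplication `Δ^×`: substitute the family `x_i ⊗ x_j` for the variables,
along a bijection `ℕ ≃ ℕ × ℕ`. -/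
def Dmul (eqt : ℕ ≃ ℕ × ℕ) (φ : MvPowerSeries ℕ ℕ) : MvPowerSeries (ℕ × ℕ) ℕ :=
  fun e => cf φ (Finsupp.equivMapDomain eqt.symm e)

/-- Left margin of an exponent vector on `ℕ ⊕ ℕ`. -/
def lM (e : (ℕ ⊕ ℕ) →₀ ℕ) : ℕ →₀ ℕ := Finsupp.comapDomain Sum.inl e Sum.inl_injective.injOn
/-- Right margin of an exponent vector on `ℕ ⊕ ℕ`. -/
def rM (e : (ℕ ⊕ ℕ) →₀ ℕ) : ℕ →₀ ℕ := Finsupp.comapDomain Sum.inr e Sum.inr_injective.injOn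

/-- The elementary tensor `a ⊗ b` realized as a power series on `ℕ ⊕ ℕ`. -/
def tensP (a b : MvPowerSeries ℕ ℕ) : MvPowerSeries (ℕ ⊕ ℕ) ℕ :=
  fun e => cf a (lM e) * cf b (rM e)

/-- Coaddition `Δ^+`: substitute `x_i ⊗ 1` and `1 ⊗ x_i` for the variables,
along a bijection `ℕ ≃ ℕ ⊕ ℕ`. -/
def Dadd (eqp : ℕ ≃ ℕ ⊕ ℕ) (φ : MvPowerSeries ℕ ℕ) : MvPowerSeries (ℕ ⊕ ℕ) ℕ :=
  fun e => cf φ (Finsupp.equivMapDomain eqp.symm e)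

/-- The order on `𝕎(𝕃)`: `f ≤ g` iff `g (m_λ) ≤ f (m_λ)` (usual order on `[0,∞]`)
for every partition `λ ∈ ℙ`. -/
def leF (F G : Lam → Trop) : Prop :=
  ∀ l : Ptn, l.1 ≠ 0 → untrop (G (mP l)) ≤ untrop (F (mP l))

/-- Witt multiplication: `(f ⊗ g)(φ) = min` of `f(m_μ) + g(m_μ')` over the pairs `(μ, μ')`
occurring in `Δ^×(φ)`. -/
def wmulF (eqt : ℕ ≃ ℕ × ℕ) (F G : Lam → Trop) : Lam → Trop := fun φ =>
  trop (sInf {x : ℝ≥0∞ | ∃ e, cf (Dmul eqt (φ : MvPowerSeries ℕ ℕ)) e ≠ 0 ∧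
    x = untrop (F (mP ⟨parts (rowM e), zero_not_mem_parts _⟩)) +
        untrop (G (mP ⟨parts (colM e), zero_not_mem_parts _⟩))})

/-- Witt addition: `(f ⊕ g)(φ) = min` of `f(m_μ) + g(m_μ')` over the pairs `(μ, μ')`
occurring in `Δ^+(φ)`. -/
def waddF (eqp : ℕ ≃ ℕ ⊕ ℕ) (F G : Lam → Trop) : Lam → Trop := fun φ =>
  trop (sInf {x : ℝ≥0∞ | ∃ e, cf (Dadd eqp (φ : MvPowerSeries ℕ ℕ)) e ≠ 0 ∧
    x = untrop (F (mP ⟨parts (lM e), zero_not_mem_parts _⟩)) +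
        untrop (G (mP ⟨parts (rM e), zero_not_mem_parts _⟩))})

/-- Specification of the multiplicative unit `0̄` of `𝕎(𝕃)`:
`0̄(m_(n)) = 0` for one-part partitions and `0̄(m_λ) = ∞` otherwise. -/
def zbar (z : WL) : Prop :=
  ∀ l : Ptn, z (mP l) = if l.1.card ≤ 1 then trop (0 : ℝ≥0∞) else trop (⊤ : ℝ≥0∞)

/-- The partition `(2,1)`. -/
def p21 : Ptn := ⟨{2, 1}, by decide⟩

/-- Specification of `θ(r) ∈ 𝕎(𝕃)`: `θ(r)(m_(n)) = n·r` for one-part partitions and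
`θ(r)(m_λ) = ∞` for all other nonempty partitions. -/
def thetaSpec (r : ℝ≥0∞) (F : WL) : Prop :=
  ∀ l : Ptn, l.1 ≠ 0 →
    F (mP l) = if l.1.card = 1 then trop ((l.1.sum : ℝ≥0∞) * r) else trop (⊤ : ℝ≥0∞)

-- ————— auxiliary lemmas —————

lemma parts_def (d : ℕ →₀ ℕ) : parts d = d.support.val.map d := rfl

lemma parts_eq_zero_iff (d : ℕ →₀ ℕ) : parts d = 0 ↔ d = 0 := by
  rw [parts_def, Multiset.map_eq_zero, Finset.val_eq_zero, Finsupp.support_eq_empty]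

lemma mfun_zero : mfun 0 = (1 : MvPowerSeries ℕ ℕ) := by
  funext d
  show _ = MvPowerSeries.coeff d 1
  rw [MvPowerSeries.coeff_one, mfun]
  by_cases hd : d = 0
  · subst hd; simp [parts_def]
  · rw [if_neg (fun h => hd ((parts_eq_zero_iff d).mp h)), if_neg hd]

lemma mP_zero (h : (0:ℕ) ∉ (0 : Multiset ℕ)) : mP ⟨0, h⟩ = 1 :=
  Subtype.ext mfun_zero

lemma parts_single (a : ℕ) (n : ℕ) (hn : n ≠ 0) :
    parts (Finsupp.single a n) = {n} := by
  rw [parts_def, Finsupp.support_single_ne_zero a hn]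
  simp

lemma parts_equiv (eqp : ℕ ≃ ℕ ⊕ ℕ) (e : (ℕ ⊕ ℕ) →₀ ℕ) :
    parts (Finsupp.equivMapDomain eqp.symm e) = e.support.val.map e := by
  rw [parts_def]
  have hs : (Finsupp.equivMapDomain eqp.symm e).support = e.support.map eqp.symm.toEmbedding := rfl
  rw [hs, Finset.map_val, Multiset.map_map]
  refine Multiset.map_congr rfl fun a _ => ?_
  simp

lemma cf_Dadd (eqp : ℕ ≃ ℕ ⊕ ℕ) (l : Multiset ℕ) (e : (ℕ ⊕ ℕ) →₀ ℕ) :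
    cf (Dadd eqp (mfun l)) e = if e.support.val.map e = l then 1 else 0 := by
  show (if parts (Finsupp.equivMapDomain eqp.symm e) = l then 1 else 0) = _
  rw [parts_equiv]

lemma parts_split (e : (ℕ ⊕ ℕ) →₀ ℕ) :
    parts (lM e) + parts (rM e) = e.support.val.map e := by
  classical
  have hL : (lM e).support.val.map Sum.inl
      = e.support.val.filter (fun x => x.isLeft = true) := by
    refine (Multiset.Nodup.ext (Multiset.Nodup.map Sum.inl_injective (lM e).support.nodup)
      (Multiset.Nodup.filter _ e.support.nodup)).mpr fun x => ?_
    simp only [Multiset.mem_map, Multiset.mem_filter, Finset.mem_val, Finsupp.mem_support_iff]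
    constructor
    · rintro ⟨n, hn, rfl⟩
      exact ⟨by simpa [lM, Finsupp.comapDomain_apply] using hn, rfl⟩
    · rintro ⟨hx, hleft⟩
      cases x with
      | inl n => exact ⟨n, by simpa [lM, Finsupp.comapDomain_apply] using hx, rfl⟩
      | inr n => simp at hleft
  have hR : (rM e).support.val.map Sum.inr
      = e.support.val.filter (fun x => ¬ x.isLeft = true) := by
    refine (Multiset.Nodup.ext (Multiset.Nodup.map Sum.inr_injective (rM e).support.nodup)
      (Multiset.Nodup.filter _ e.support.nodup)).mpr fun x => ?_
    simp only [Multiset.mem_map, Multiset.mem_filter, Finset.mem_val, Finsupp.mem_support_iff]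
    constructor
    · rintro ⟨n, hn, rfl⟩
      exact ⟨by simpa [rM, Finsupp.comapDomain_apply] using hn, by simp⟩
    · rintro ⟨hx, hleft⟩
      cases x with
      | inl n => simp at hleft
      | inr n => exact ⟨n, by simpa [rM, Finsupp.comapDomain_apply] using hx, rfl⟩
  have h1 : parts (lM e) = (e.support.val.filter (fun x => x.isLeft = true)).map e := by
    rw [← hL, Multiset.map_map, parts_def]
    refine Multiset.map_congr rfl fun a _ => ?_
    simp [lM, Finsupp.comapDomain_apply]
  have h2 : parts (rM e) = (e.support.val.filter (fun x => ¬ x.isLeft = true)).map e := by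
    rw [← hR, Multiset.map_map, parts_def]
    refine Multiset.map_congr rfl fun a _ => ?_
    simp [rM, Finsupp.comapDomain_apply]
  rw [h1, h2, ← Multiset.map_add, Multiset.filter_add_not]

/-- The value of `θ(r)` on an arbitrary partition, in `[0,∞]`. -/
def thv (r : ℝ≥0∞) (s : Multiset ℕ) : ℝ≥0∞ :=
  if s = 0 then 0 else if s.card = 1 then (s.sum : ℝ≥0∞) * r else ⊤

lemma untrop_theta (r : ℝ≥0∞) (F : WL) (hF : thetaSpec r F) (d : ℕ →₀ ℕ) :
    untrop (F (mP ⟨parts d, zero_not_mem_parts d⟩)) = thv r (parts d) := by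
  unfold thv
  by_cases h0 : parts d = 0
  · rw [if_pos h0]
    have : (⟨parts d, zero_not_mem_parts d⟩ : Ptn) = ⟨0, by simp⟩ := Subtype.ext h0
    rw [this, mP_zero, map_one, untrop_one]
  · rw [if_neg h0, hF ⟨parts d, zero_not_mem_parts d⟩ h0]
    split_ifs <;> simp

lemma split21 {s t : Multiset ℕ} (h : s + t = ({2, 1} : Multiset ℕ)) :
    (s = 0 ∧ t = {2, 1}) ∨ (s = {2} ∧ t = {1}) ∨ (s = {1} ∧ t = {2}) ∨
      (s = {2, 1} ∧ t = 0) := by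
  have hc : s.card + t.card = 2 := by
    rw [← Multiset.card_add, h]; rfl
  have hcases : s.card = 0 ∨ s.card = 1 ∨ s.card = 2 := by omega
  rcases hcases with h0 | h1 | h2
  · have hs : s = 0 := Multiset.card_eq_zero.mp h0
    exact Or.inl ⟨hs, by rwa [hs, zero_add] at h⟩
  · obtain ⟨a, rfl⟩ := Multiset.card_eq_one.mp h1
    obtain ⟨b, rfl⟩ := Multiset.card_eq_one.mp (show t.card = 1 by omega)
    have hab : a ::ₘ ({b} : Multiset ℕ) = (2 : ℕ) ::ₘ {1} := by
      simpa [Multiset.singleton_add] using h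
    have ha : a = 2 ∨ a = 1 := by
      have : a ∈ (2 : ℕ) ::ₘ ({1} : Multiset ℕ) := hab ▸ Multiset.mem_cons_self a _
      simpa using this
    rcases ha with rfl | rfl
    · have hb : ({b} : Multiset ℕ) = {1} := (Multiset.cons_inj_right _).mp hab
      exact Or.inr (Or.inl ⟨rfl, hb⟩)
    · have h21 : (2 : ℕ) ::ₘ ({1} : Multiset ℕ) = 1 ::ₘ {2} := by decide
      have hb : ({b} : Multiset ℕ) = {2} :=
        (Multiset.cons_inj_right _).mp (hab.trans h21)
      exact Or.inr (Or.inr (Or.inl ⟨rfl, hb⟩))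
  · have ht : t = 0 := Multiset.card_eq_zero.mp (by omega)
    exact Or.inr (Or.inr (Or.inr ⟨by rwa [ht, add_zero] at h, ht⟩))

/-- `θ : 𝕃 → 𝕎(𝕃)` does not preserve addition:
`(θ(r) ⊕ θ(r'))(m_(2,1)) = min {2r + r', r + 2r'}` while
`θ(min{r,r'})(m_(2,1)) = ∞`, so for finite `r, r'` these disagree and
`θ(min{r,r'}) ≠ θ(r) ⊕ θ(r')`; `θ` is only monoidal, not a rig homomorphism. -/
theorem theta_not_additive (eqp : ℕ ≃ ℕ ⊕ ℕ) (Θ : ℝ≥0∞ → WL)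
    (hΘ : ∀ r, thetaSpec r (Θ r)) (r r' : ℝ≥0∞) :
    waddF eqp ⇑(Θ r) ⇑(Θ r') (mP p21) = trop (min (2 * r + r') (r + 2 * r')) ∧
    Θ (min r r') (mP p21) = trop (⊤ : ℝ≥0∞) ∧
    (r ≠ ⊤ → r' ≠ ⊤ → waddF eqp ⇑(Θ r) ⇑(Θ r') ≠ ⇑(Θ (min r r'))) := by
  have hcoe : ((mP p21 : Lam) : MvPowerSeries ℕ ℕ) = mfun {2, 1} := rfl
  -- values of `thv`
  have t0 : ∀ q : ℝ≥0∞, thv q 0 = 0 := fun q => by simp [thv]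
  have t1 : ∀ q : ℝ≥0∞, thv q ({1} : Multiset ℕ) = q := fun q => by simp [thv]
  have t2 : ∀ q : ℝ≥0∞, thv q ({2} : Multiset ℕ) = 2 * q := fun q => by
    norm_num [thv]
  have t21 : ∀ q : ℝ≥0∞, thv q ({2, 1} : Multiset ℕ) = ⊤ := fun q => by
    rw [thv, if_neg (by decide), if_neg (by decide)]
  -- witnesses
  set e₁ : (ℕ ⊕ ℕ) →₀ ℕ :=
    Finsupp.single (Sum.inl 0) 2 + Finsupp.single (Sum.inr 0) 1 with he₁
  set e₂ : (ℕ ⊕ ℕ) →₀ ℕ :=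
    Finsupp.single (Sum.inl 0) 1 + Finsupp.single (Sum.inr 0) 2 with he₂
  have hl₁ : lM e₁ = Finsupp.single 0 2 := by
    ext n; simp [lM, Finsupp.comapDomain_apply, he₁, Finsupp.single_apply]
  have hr₁ : rM e₁ = Finsupp.single 0 1 := by
    ext n; simp [rM, Finsupp.comapDomain_apply, he₁, Finsupp.single_apply]
  have hl₂ : lM e₂ = Finsupp.single 0 1 := by
    ext n; simp [lM, Finsupp.comapDomain_apply, he₂, Finsupp.single_apply]
  have hr₂ : rM e₂ = Finsupp.single 0 2 := by
    ext n; simp [rM, Finsupp.comapDomain_apply, he₂, Finsupp.single_apply]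
  have hsupp : ∀ (m n : ℕ), m ≠ 0 → n ≠ 0 → ∀ f : (ℕ ⊕ ℕ) →₀ ℕ,
      f = Finsupp.single (Sum.inl 0) m + Finsupp.single (Sum.inr 0) n →
      f.support.val.map ⇑f = {m, n} := by
    rintro m n hm hn f rfl
    have hd : Disjoint (Finsupp.single (Sum.inl 0 : ℕ ⊕ ℕ) m).support
        (Finsupp.single (Sum.inr 0 : ℕ ⊕ ℕ) n).support := by
      rw [Finsupp.support_single_ne_zero _ hm, Finsupp.support_single_ne_zero _ hn]
      simp
    have hs : (Finsupp.single (Sum.inl 0 : ℕ ⊕ ℕ) m + Finsupp.single (Sum.inr 0) n).support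
        = ({Sum.inl 0, Sum.inr 0} : Finset (ℕ ⊕ ℕ)) := by
      rw [Finsupp.support_add_eq hd, Finsupp.support_single_ne_zero _ hm,
        Finsupp.support_single_ne_zero _ hn]
      rfl
    rw [hs, Finset.insert_val_of_notMem (by simp), Finset.singleton_val,
      Multiset.map_cons, Multiset.map_singleton]
    simp [Finsupp.single_apply]
  have hsupp₁ : e₁.support.val.map e₁ = {2, 1} := hsupp 2 1 (by norm_num) (by norm_num) e₁ he₁
  have hsupp₂ : e₂.support.val.map e₂ = {1, 2} := hsupp 1 2 (by norm_num) (by norm_num) e₂ he₂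
  have hsupp₂' : e₂.support.val.map e₂ = {2, 1} := by
    rw [hsupp₂]; decide
  -- the first conjunct
  have hmain : waddF eqp ⇑(Θ r) ⇑(Θ r') (mP p21)
      = trop (min (2 * r + r') (r + 2 * r')) := by
    rw [waddF]
    congr 1
    apply le_antisymm
    · refine le_min (sInf_le ⟨e₁, ?_, ?_⟩) (sInf_le ⟨e₂, ?_, ?_⟩)
      · rw [hcoe, cf_Dadd, if_pos hsupp₁]; exact one_ne_zero
      · rw [untrop_theta r (Θ r) (hΘ r), untrop_theta r' (Θ r') (hΘ r'),
          hl₁, hr₁, parts_single _ _ (by norm_num), parts_single _ _ (by norm_num),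
          t2, t1]
      · rw [hcoe, cf_Dadd, if_pos hsupp₂']; exact one_ne_zero
      · rw [untrop_theta r (Θ r) (hΘ r), untrop_theta r' (Θ r') (hΘ r'),
          hl₂, hr₂, parts_single _ _ (by norm_num), parts_single _ _ (by norm_num),
          t1, t2]
    · refine le_sInf ?_
      rintro x ⟨e, hcf, rfl⟩
      rw [hcoe, cf_Dadd] at hcf
      have he : e.support.val.map e = {2, 1} := by
        by_contra hne
        rw [if_neg hne] at hcf
        exact hcf rfl
      have hsplit : parts (lM e) + parts (rM e) = {2, 1} := by
        rw [parts_split, he]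
      rw [untrop_theta r (Θ r) (hΘ r), untrop_theta r' (Θ r') (hΘ r')]
      rcases split21 hsplit with ⟨hL, hR⟩ | ⟨hL, hR⟩ | ⟨hL, hR⟩ | ⟨hL, hR⟩ <;>
        rw [hL, hR]
      · rw [t0, t21]; exact le_top.trans_eq (zero_add _).symm
      · rw [t2, t1]; exact min_le_left _ _
      · rw [t1, t2]; exact min_le_right _ _
      · rw [t21, t0]; exact le_top.trans_eq (add_zero _).symm
  have hsec : Θ (min r r') (mP p21) = trop (⊤ : ℝ≥0∞) := by
    rw [hΘ (min r r') p21 (by decide), if_neg (by decide)]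
  refine ⟨hmain, hsec, ?_⟩
  intro hr hr' hEq
  have hx := congrFun hEq (mP p21)
  rw [hmain] at hx
  have htop : min (2 * r + r') (r + 2 * r') = ⊤ := by
    have : trop (min (2 * r + r') (r + 2 * r')) = trop (⊤ : ℝ≥0∞) := by
      rw [hx]; exact hsec
    exact trop_injective this
  have hA : 2 * r + r' ≠ ⊤ :=
    ENNReal.add_ne_top.mpr ⟨ENNReal.mul_ne_top ENNReal.ofNat_ne_top hr, hr'⟩
  exact hA (min_eq_top.mp htop).1

end
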